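/- Every subgroup of the infinite dihedral group which is an extension of a finite group by a cyclic group is itself cyclic. -/

import Mathlib

open DihedralGroup

private lemma zmod0_cancel {a b c : ZMod 0} (hc : c ≠ 0) (h : a * c = b * c) : a = b := by
  obtain ⟨x, rfl⟩ := ZMod.intCast_surjective a
  obtain ⟨y, rfl⟩ := ZMod.intCast_surjective b
  obtain ⟨z, rfl⟩ := ZMod.intCast_surjective c
  have hz : z ≠ 0 := by rintro rfl; simp at hc
  have h2 : ((x*z : ℤ) : ZMod 0) = ((y*z : ℤ) : ZMod 0) := by exact_mod_cast h
  exact congrArg _ (mul_right_cancel₀ hz (Int.cast_injective h2))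

private lemma r_pow_nat (c : ZMod 0) (m : ℕ) : (r c : DihedralGroup 0) ^ m = r ((m : ZMod 0) * c) := by
  induction m with
  | zero => simp
  | succ k ih => rw [pow_succ, ih, r_mul_r]; congr 1; push_cast; ring

private lemma finite_no_rot (N : Subgroup (DihedralGroup 0))
    (hN : (N : Set (DihedralGroup 0)).Finite) {c : ZMod 0} (hc : c ≠ 0)
    (h : r c ∈ N) : False := by
  refine Set.infinite_of_injective_forall_mem
    (f := fun m : ℕ => (r c : DihedralGroup 0) ^ m) ?_ ?_ hN
  · intro a b hab
    simp only [r_pow_nat, r.injEq] at hab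
    exact_mod_cast (zmod0_cancel hc hab : ((a:ℕ) : ZMod 0) = b)
  · intro m; exact N.pow_mem h m

private lemma zmod0_double {b : ZMod 0} (h : b + b = 0) : b = 0 := by
  obtain ⟨x, rfl⟩ := ZMod.intCast_surjective b
  have h2 : ((x + x : ℤ) : ZMod 0) = ((0 : ℤ) : ZMod 0) := by exact_mod_cast h
  have h3 : x + x = 0 := Int.cast_injective h2
  have : x = 0 := by omega
  simp [this]

private lemma r_inv (c : ZMod 0) : (r c : DihedralGroup 0)⁻¹ = r (-c) := by
  apply inv_eq_of_mul_eq_one_right; rw [r_mul_r, add_neg_cancel, one_def]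

private lemma sr_inv (c : ZMod 0) : (sr c : DihedralGroup 0)⁻¹ = sr c :=
  inv_eq_of_mul_eq_one_right (sr_mul_self c)

theorem stmt_2 (H : Subgroup (DihedralGroup 0))
    (hfbc : ∃ (C : Type) (_ : Group C) (f : H →* C),
      IsCyclic C ∧ Function.Surjective f ∧ Finite f.ker) :
    IsCyclic H := by
  obtain ⟨C, _, f, hC, hsurj, hker⟩ := hfbc
  by_cases hbot : f.ker = ⊥
  · have hinj : Function.Injective f := (MonoidHom.ker_eq_bot_iff f).mp hbot
    exact isCyclic_of_surjective (MulEquiv.ofBijective f ⟨hinj, hsurj⟩).symm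
      (MulEquiv.ofBijective f ⟨hinj, hsurj⟩).symm.surjective
  · set N : Subgroup (DihedralGroup 0) := f.ker.map H.subtype with hNdef
    have hNfin : (N : Set (DihedralGroup 0)).Finite := by
      have h1 : ((f.ker : Set H)).Finite := Set.toFinite _
      simpa [hNdef, Subgroup.coe_map] using h1.image H.subtype
    have hNH : N ≤ H := Subgroup.map_subtype_le _
    have hconj : ∀ g ∈ H, ∀ x ∈ N, g * x * g⁻¹ ∈ N := by
      intro g hg x hx
      obtain ⟨y, hy, rfl⟩ := hx
      exact ⟨⟨g, hg⟩ * y * ⟨g, hg⟩⁻¹, (MonoidHom.normal_ker f).conj_mem y hy ⟨g, hg⟩, rfl⟩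
    -- get a nontrivial element of the kernel
    obtain ⟨y, hy, hy1⟩ : ∃ y : H, y ∈ f.ker ∧ y ≠ 1 := by
      by_contra hcon
      push_neg at hcon
      exact hbot ((Subgroup.eq_bot_iff_forall _).mpr hcon)
    have hyv1 : (y : DihedralGroup 0) ≠ 1 := fun h => hy1 (Subtype.ext h)
    have hyN : (y : DihedralGroup 0) ∈ N := ⟨y, hy, rfl⟩
    obtain ⟨(⟨k⟩|⟨a⟩), hd⟩ : ∃ d : DihedralGroup 0, d = (y : DihedralGroup 0) := ⟨_, rfl⟩
    · -- y is a nontrivial rotation: contradicts finiteness of the kernel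
      have hk : k ≠ 0 := by
        rintro rfl; exact hyv1 (by rw [← hd, ← one_def])
      exact (finite_no_rot N hNfin hk (hd ▸ hyN)).elim
    · -- y = sr a, a reflection
      have haN : sr a ∈ N := hd ▸ hyN
      have haH : sr a ∈ H := hNH haN
      have key : ∀ g ∈ H, g = 1 ∨ g = sr a := by
        intro g hg
        cases g with
        | r b =>
          left
          by_contra hne
          have hb : b ≠ 0 := by rintro rfl; exact hne one_def.symm
          have h1 : r b * sr a * (r b)⁻¹ ∈ N := hconj _ hg _ haN
          have h2 : (sr a)⁻¹ * (r b * sr a * (r b)⁻¹) ∈ N := N.mul_mem (N.inv_mem haN) h1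
          have he : (sr a)⁻¹ * (r b * sr a * (r b)⁻¹) = r (-b + -b) := by
            rw [sr_inv, r_inv, r_mul_sr, sr_mul_r, sr_mul_sr]; congr 1; ring
          have hb2 : -b + -b ≠ 0 := fun h => hb (neg_eq_zero.mp (zmod0_double h))
          exact (finite_no_rot N hNfin hb2 (he ▸ h2)).elim
        | sr c =>
          right
          by_contra hne
          have hca : c - a ≠ 0 := fun h => hne (by rw [sub_eq_zero.mp h])
          have h1 : sr c * sr a * (sr c)⁻¹ ∈ N := hconj _ hg _ haN
          have h2 : (sr a)⁻¹ * (sr c * sr a * (sr c)⁻¹) ∈ N := N.mul_mem (N.inv_mem haN) h1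
          have he : (sr a)⁻¹ * (sr c * sr a * (sr c)⁻¹) = r ((c - a) + (c - a)) := by
            rw [sr_inv, sr_inv, sr_mul_sr, r_mul_sr, sr_mul_sr]; congr 1; ring
          have hc2 : (c - a) + (c - a) ≠ 0 := fun h => hca (zmod0_double h)
          exact (finite_no_rot N hNfin hc2 (he ▸ h2)).elim
      refine ⟨⟨⟨sr a, haH⟩, fun x => ?_⟩⟩
      rcases key x x.2 with h | h
      · have : x = 1 := Subtype.ext h
        rw [this]; exact ⟨0, by simp⟩
      · have : x = ⟨sr a, haH⟩ := Subtype.ext h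
        rw [this]; exact ⟨1, by simp⟩
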